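/- The alternating series sum over k≥1 of (-1)^k/((2k-1)(2k)^3(2k+1)) equals (ln(2) - 1)/2 + (3/32)ζ(3). -/

import Mathlib

open Filter Finset Real Topology

noncomputable def ZR : ℝ := ∑' n : ℕ, 1 / ((n : ℝ) + 1) ^ 3

lemma summable_cube : Summable (fun n : ℕ => 1 / ((n : ℝ) + 1) ^ 3) := by
  have h : Summable (fun n : ℕ => 1 / (n : ℝ) ^ 3) :=
    summable_one_div_nat_pow.mpr (by norm_num)
  exact ((summable_nat_add_iff 1).mpr h).congr (by intro n; push_cast; ring_nf)

noncomputable def gR (k : ℕ) : ℝ := (-1)^k / (2*(k:ℝ)+2)^3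

lemma gR_even (m : ℕ) : gR (2*m) = (1/8) * (1 / (((2*m : ℕ):ℝ) + 1) ^ 3) := by
  have h1 : ((-1:ℝ))^(2*m) = 1 := by rw [pow_mul]; norm_num
  rw [gR, h1]
  push_cast
  field_simp
  ring

lemma gR_odd (m : ℕ) : gR (2*m+1) = -((1/8) * (1 / (((2*m+1 : ℕ):ℝ) + 1) ^ 3)) := by
  have h1 : ((-1:ℝ))^(2*m+1) = -1 := by rw [pow_succ, pow_mul]; norm_num
  rw [gR, h1]
  push_cast
  field_simp
  ring

lemma tsum_gR_eq : ∑' k, gR k = (3/32) * ZR := by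
  set f : ℕ → ℝ := fun n => 1 / ((n : ℝ) + 1) ^ 3 with hf
  have hfe : Summable (fun m => f (2*m)) :=
    summable_cube.comp_injective (fun a b h => by omega)
  have hfo : Summable (fun m => f (2*m+1)) :=
    summable_cube.comp_injective (fun a b h => by omega)
  have hsplit := tsum_even_add_odd hfe hfo
  have hZe : ∑' m, f (2*m+1) = (1/8) * ZR := by
    have : (fun m : ℕ => f (2*m+1)) = (fun m : ℕ => (1/8) * f m) := by
      funext m
      simp only [hf]
      push_cast
      field_simp
      ring
    rw [this, tsum_mul_left]; rfl
  have hZo : ∑' m, f (2*m) = (7/8) * ZR := by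
    have : ZR = ∑' n, f n := rfl
    linarith [hsplit]
  have hge : Summable (fun m => gR (2*m)) :=
    (hfe.mul_left (1/8)).congr (fun m => (gR_even m).symm)
  have hgo : Summable (fun m => gR (2*m+1)) :=
    ((hfo.mul_left (1/8)).neg).congr (fun m => (gR_odd m).symm)
  have he : ∑' m, gR (2*m) = (1/8) * ((7/8) * ZR) := by
    rw [tsum_congr gR_even, tsum_mul_left, hZo]
  have ho : ∑' m, gR (2*m+1) = -((1/8) * ((1/8) * ZR)) := by
    rw [tsum_congr gR_odd, tsum_neg, tsum_mul_left, hZe]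
  rw [← tsum_even_add_odd hge hgo, he, ho]
  ring

noncomputable def aR (k : ℕ) : ℝ :=
  (-1) ^ (k + 1) / ((2 * (k : ℝ) + 1) * (2 * k + 2) ^ 3 * (2 * k + 3))

noncomputable def cR (k : ℕ) : ℝ := (-1) ^ (k + 1) / (2 * (k : ℝ) + 1)

lemma aR_eq (k : ℕ) : aR k = (1/2) * (cR k - cR (k+1))
    + (1/2) * ((-1:ℝ)^k / ((k:ℝ)+1)) + gR k := by
  have h1 : ((-1:ℝ))^(k+1) = -(-1)^k := by rw [pow_succ]; ring
  have h2 : ((-1:ℝ))^(k+2) = (-1)^k := by rw [pow_add]; ring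
  have d1 : (2*(k:ℝ)+1) ≠ 0 := by positivity
  have d2 : (2*(k:ℝ)+2) ≠ 0 := by positivity
  have d3 : (2*(k:ℝ)+3) ≠ 0 := by positivity
  have d4 : ((k:ℝ)+1) ≠ 0 := by positivity
  simp only [aR, cR, gR]
  push_cast
  rw [show k+1+1 = k+2 from rfl] at *
  rw [h1, h2]
  field_simp
  ring

lemma summable_aR : Summable aR := by
  apply Summable.of_norm_bounded summable_cube
  intro k
  have hx : (0:ℝ) ≤ (k:ℝ) := Nat.cast_nonneg k
  have hd : (0:ℝ) < (2 * (k : ℝ) + 1) * (2 * k + 2) ^ 3 * (2 * k + 3) := by positivity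
  have h1 : ‖aR k‖ = 1 / ((2 * (k : ℝ) + 1) * (2 * k + 2) ^ 3 * (2 * k + 3)) := by
    rw [aR, norm_div, norm_pow, norm_neg, norm_one, one_pow, Real.norm_eq_abs,
      abs_of_pos hd]
  rw [h1]
  apply one_div_le_one_div_of_le (by positivity)
  have h3 : (0:ℝ) ≤ ((k:ℝ)+1)^3 := by positivity
  have hq : (1:ℝ) ≤ (2*(k:ℝ)+1)*(2*(k:ℝ)+3)*8 := by nlinarith
  calc ((k:ℝ)+1)^3 = 1 * ((k:ℝ)+1)^3 := by ring
    _ ≤ ((2*(k:ℝ)+1)*(2*(k:ℝ)+3)*8) * ((k:ℝ)+1)^3 := mul_le_mul_of_nonneg_right hq h3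
    _ = (2*(k:ℝ)+1)*(2*(k:ℝ)+2)^3*(2*(k:ℝ)+3) := by ring

lemma alt_sum_eq_harmonic (n : ℕ) :
    ∑ k ∈ range (2*n), (-1:ℝ)^k / ((k:ℝ)+1)
      = ((harmonic (2*n) : ℚ) : ℝ) - ((harmonic n : ℚ) : ℝ) := by
  induction n with
  | zero => simp
  | succ n ih =>
    have e : 2*(n+1) = (2*n) + 1 + 1 := by ring
    rw [e, sum_range_succ, sum_range_succ, ih, harmonic_succ, harmonic_succ n,
      show 2*n+1+1 = (2*n+1)+1 from rfl, harmonic_succ]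
    have h1 : ((-1:ℝ))^(2*n) = 1 := by rw [pow_mul]; norm_num
    have h2 : ((-1:ℝ))^(2*n+1) = -1 := by rw [pow_succ, h1]; ring
    rw [h1, h2]
    push_cast
    field_simp
    ring

lemma h2n_tendsto : Tendsto (fun n : ℕ => 2*n) atTop atTop :=
  tendsto_atTop_atTop_of_monotone (fun a b h => by omega) (fun b => ⟨b, by omega⟩)

lemma tendsto_alt_harmonic :
    Tendsto (fun n : ℕ => ∑ k ∈ range (2*n), (-1:ℝ)^k / ((k:ℝ)+1)) atTop
      (𝓝 (Real.log 2)) := by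
  have h1 := Real.tendsto_harmonic_sub_log
  have h2 : Tendsto (fun n : ℕ => ((harmonic (2*n) : ℚ) : ℝ) - Real.log ((2*n : ℕ) : ℝ))
      atTop (𝓝 (Real.eulerMascheroniConstant)) := h1.comp h2n_tendsto
  have h3 := h2.sub h1
  rw [sub_self] at h3
  have h4 : Tendsto (fun n : ℕ =>
      (((harmonic (2*n) : ℚ) : ℝ) - Real.log ((2*n : ℕ) : ℝ))
        - (((harmonic n : ℚ) : ℝ) - Real.log n)
      + Real.log 2) atTop (𝓝 (0 + Real.log 2)) := h3.add_const _
  rw [zero_add] at h4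
  apply Tendsto.congr' _ h4
  filter_upwards [eventually_gt_atTop 0] with n hn
  have hn' : (0:ℝ) < n := by exact_mod_cast hn
  have hlog : Real.log ((2*n : ℕ) : ℝ) = Real.log 2 + Real.log n := by
    push_cast
    rw [← Real.log_mul (by norm_num) hn'.ne']
  rw [alt_sum_eq_harmonic, hlog]
  ring

lemma summable_gR : Summable gR := by
  apply Summable.of_norm_bounded summable_cube
  intro k
  have h1 : ‖gR k‖ = 1 / (2*(k:ℝ)+2)^3 := by
    rw [gR, norm_div, norm_pow, norm_pow, norm_neg, norm_one, one_pow, Real.norm_eq_abs,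
      abs_of_pos (by positivity)]
  rw [h1]
  apply one_div_le_one_div_of_le (by positivity)
  have h2 : ((k:ℝ)+1) ≤ 2*(k:ℝ)+2 := by nlinarith [Nat.cast_nonneg (α := ℝ) k]
  exact pow_le_pow_left₀ (by positivity) h2 3

lemma tendsto_cR : Tendsto cR atTop (𝓝 0) := by
  refine squeeze_zero_norm (fun k => ?_) tendsto_one_div_add_atTop_nhds_zero_nat
  have : ‖cR k‖ = 1 / (2*(k:ℝ)+1) := by
    rw [cR, norm_div, norm_pow, norm_neg, norm_one, one_pow, Real.norm_eq_abs,
      abs_of_pos (by positivity)]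
  rw [this]
  apply one_div_le_one_div_of_le (by positivity)
  have := Nat.cast_nonneg (α := ℝ) k
  linarith

lemma partial_sum_aR (N : ℕ) :
    ∑ k ∈ range N, aR k = (1/2) * (cR 0 - cR N)
      + (1/2) * ∑ k ∈ range N, (-1:ℝ)^k / ((k:ℝ)+1)
      + ∑ k ∈ range N, gR k := by
  rw [Finset.sum_congr rfl (fun k _ => aR_eq k), Finset.sum_add_distrib,
    Finset.sum_add_distrib, ← Finset.mul_sum, ← Finset.mul_sum,
    Finset.sum_range_sub' cR N]

lemma hasSum_aR : HasSum aR ((Real.log 2 - 1)/2 + (3/32) * ZR) := by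
  have hs := summable_aR.hasSum
  have ht : Tendsto (fun n : ℕ => ∑ k ∈ range (2*n), aR k) atTop (𝓝 (∑' k, aR k)) :=
    hs.tendsto_sum_nat.comp h2n_tendsto
  have hc0 : cR 0 = -1 := by simp [cR]
  have hg : Tendsto (fun n : ℕ => ∑ k ∈ range (2*n), gR k) atTop (𝓝 ((3/32) * ZR)) := by
    have := summable_gR.hasSum.tendsto_sum_nat.comp h2n_tendsto
    rwa [tsum_gR_eq] at this
  have hcc : Tendsto (fun n : ℕ => (1/2) * (cR 0 - cR (2*n))) atTop
      (𝓝 ((1/2) * (-1 - 0))) := by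
    exact (tendsto_const_nhds.sub (tendsto_cR.comp h2n_tendsto)).const_mul _ |>.congr
      (fun n => by simp [Function.comp, hc0])
  have halt : Tendsto (fun n : ℕ => (1/2) * ∑ k ∈ range (2*n), (-1:ℝ)^k / ((k:ℝ)+1))
      atTop (𝓝 ((1/2) * Real.log 2)) := tendsto_alt_harmonic.const_mul _
  have htotal : Tendsto (fun n : ℕ => ∑ k ∈ range (2*n), aR k) atTop
      (𝓝 ((1/2) * (-1 - 0) + (1/2) * Real.log 2 + (3/32) * ZR)) := by
    have := (hcc.add halt).add hg
    exact this.congr (fun n => (partial_sum_aR (2*n)).symm)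
  have := tendsto_nhds_unique ht htotal
  rw [this] at hs
  convert hs using 1
  ring

lemma zeta_three_eq : riemannZeta 3 = (ZR : ℂ) := by
  have h1 : riemannZeta 3 = ∑' n : ℕ, 1 / ((n : ℂ) + 1) ^ (3:ℂ) := by
    have := zeta_eq_tsum_one_div_nat_add_one_cpow (s := 3) (by norm_num)
    rw [this]
  rw [h1, ZR, Complex.ofReal_tsum]
  apply tsum_congr
  intro n
  rw [show (3:ℂ) = ((3:ℕ):ℂ) by norm_num, Complex.cpow_natCast]
  push_cast
  ring

theorem stmt_5 :
    ∑' k : ℕ, (-1 : ℂ) ^ (k + 1) / ((2 * (k : ℂ) + 1) * (2 * k + 2) ^ 3 * (2 * k + 3)) =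
      ((Real.log 2 : ℂ) - 1) / 2 + (3 / 32) * riemannZeta 3 := by
  have h1 : ∀ k : ℕ, (-1 : ℂ) ^ (k + 1) / ((2 * (k : ℂ) + 1) * (2 * k + 2) ^ 3 * (2 * k + 3))
      = ((aR k : ℝ) : ℂ) := by
    intro k
    rw [aR]
    push_cast
    ring
  rw [tsum_congr h1, ← Complex.ofReal_tsum, hasSum_aR.tsum_eq, zeta_three_eq]
  push_cast
  ring
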